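/- For every r ∈ (0,1) and every f ∈ (0,1], the quantity Δ(f) = r·(1−r)^{1/f} / (1 − (1−r)^{1/f}) (with real exponentiation) satisfies Δ(f) ≥ f − r, with equality when f = 1. -/

import Mathlib

/-- For `r ∈ (0,1)` and `f ∈ (0,1]`, the steady-state memory
`Δ(f) = r·(1−r)^(1/f) / (1 − (1−r)^(1/f))` (real exponentiation) satisfies
`Δ(f) ≥ f − r`, with equality when `f = 1`. -/
theorem steady_state_memory_lower_bound (r f : ℝ) (hr0 : 0 < r) (hr1 : r < 1)
    (hf0 : 0 < f) (hf1 : f ≤ 1) :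
    f - r ≤ r * (1 - r) ^ (1 / f) / (1 - (1 - r) ^ (1 / f)) ∧
    (f = 1 → r * (1 - r) ^ (1 / f) / (1 - (1 - r) ^ (1 / f)) = f - r) := by
  set x : ℝ := (1 - r) ^ (1 / f) with hx
  have h1r : (0:ℝ) < 1 - r := by linarith
  have hx0 : 0 < x := Real.rpow_pos_of_pos h1r _
  have hx1 : x < 1 := Real.rpow_lt_one (le_of_lt h1r) (by linarith) (by positivity)
  have hp : (1:ℝ) ≤ 1 / f := (le_div_iff₀ hf0).mpr (by linarith)
  -- Bernoulli: 1 + (1/f) * (-r) ≤ (1 + (-r)) ^ (1/f)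
  have hbern : 1 + (1 / f) * (-r) ≤ x := by
    have := one_add_mul_self_le_rpow_one_add (s := -r) (by linarith) hp
    simpa [hx, ← sub_eq_add_neg] using this
  have hfx : f * (1 - x) ≤ r := by
    have h : 1 - r / f ≤ x := by
      have : 1 + (1/f) * (-r) = 1 - r / f := by ring
      linarith [hbern, this.symm]
    have : f * (1 - x) ≤ f * (r / f) := by
      apply mul_le_mul_of_nonneg_left (by linarith) (le_of_lt hf0)
    calc f * (1 - x) ≤ f * (r / f) := this
      _ = r := by field_simp
  have h1x : 0 < 1 - x := by linarith
  constructor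
  · rw [le_div_iff₀ h1x]
    nlinarith
  · intro hf
    subst hf
    have : x = 1 - r := by simp [hx]
    rw [this]
    field_simp
    ring_nf
    field_simp
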